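/- Fix parameters a, b, α, β ∈ ℝ. The curve γ : [0,1] → ℝ³ given by γ(u) = (au + bu², αu² + βu³, αa u³/6 + aβ u⁴/4 + bβ u⁵/10) is a horizontal curve in the Heisenberg group passing through the origin at u = 0. -/

import Mathlib

open Set

/-- The polynomial curve γ(u) = (au + bu², αu² + βu³, αa u³/6 + aβ u⁴/4 + bβ u⁵/10)
is horizontal and passes through the origin at u = 0, for all parameters. -/
theorem polynomial_curve_is_horizontal
    (a b α β : ℝ) (γ1 γ2 γ3 : ℝ → ℝ)
    (hγ1 : γ1 = fun u => a * u + b * u^2)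
    (hγ2 : γ2 = fun u => α * u^2 + β * u^3)
    (hγ3 : γ3 = fun u => α * a * u^3 / 6 + a * β * u^4 / 4 + b * β * u^5 / 10) :
    γ1 0 = 0 ∧ γ2 0 = 0 ∧ γ3 0 = 0 ∧
    ∀ u ∈ Icc (0:ℝ) 1,
      deriv γ3 u = -(1/2) * γ2 u * deriv γ1 u + (1/2) * γ1 u * deriv γ2 u := by
  subst hγ1 hγ2 hγ3
  refine ⟨by norm_num, by norm_num, by norm_num, ?_⟩
  intro u _
  have h1 : HasDerivAt (fun u : ℝ => a * u + b * u^2) (a + b * (2 * u)) u := by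
    simpa [Pi.add_def] using ((hasDerivAt_id u).const_mul a).add
      (((hasDerivAt_pow 2 u)).const_mul b)
  have h2 : HasDerivAt (fun u : ℝ => α * u^2 + β * u^3) (α * (2 * u) + β * (3 * u^2)) u := by
    simpa [Pi.add_def] using ((hasDerivAt_pow 2 u).const_mul α).add
      (((hasDerivAt_pow 3 u)).const_mul β)
  have h3 : HasDerivAt (fun u : ℝ => α * a * u^3 / 6 + a * β * u^4 / 4 + b * β * u^5 / 10)
      (α * a * (3 * u^2) / 6 + a * β * (4 * u^3) / 4 + b * β * (5 * u^4) / 10) u := by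
    simpa [Pi.add_def] using ((((hasDerivAt_pow 3 u).const_mul (α * a)).div_const 6).add
      (((hasDerivAt_pow 4 u).const_mul (a * β)).div_const 4)).add
      (((hasDerivAt_pow 5 u).const_mul (b * β)).div_const 10)
  rw [h1.deriv, h2.deriv, h3.deriv]
  ring
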